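/- For all integers v, w ≥ 2, the Karoubi envelopes of the categories C_v and C_w of finitely generated free Post algebras of valences v and w are equivalent categories. (This expresses the paper's claim that the Lawvere theories Post_v for all v ≥ 2 are Morita equivalent to one another, and in particular to the theory Boole = Post_2 of Boolean algebras.) -/

import Mathlib

open CategoryTheory

/-- The property of a finite type of being (bijective to) a finitely generated
free `v`-valued Post algebra, i.e. of the form `Fin r → Fin v`. -/
def IsPostAlg (v : ℕ) (X : FintypeCat) : Prop :=
  ∃ r : ℕ, Nonempty (X ≃ (Fin r → Fin v))

/-- `C_v`: the full subcategory of the category of finite types spanned by the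
types `Fin r → Fin v`; the category of finitely generated free `v`-valued Post
algebras is its opposite. -/
abbrev PostCat (v : ℕ) := ObjectProperty.FullSubcategory (IsPostAlg v)

namespace PostAux

attribute [local instance] Classical.propDecidable

lemma happ {X Y : FintypeCat} {f g : X ⟶ Y} (h : f = g) (x : X) : f x = g x :=
  ConcreteCategory.congr_hom h x

lemma happ' {v : ℕ} {X Y : PostCat v} {f g : X ⟶ Y} (h : f = g) (x : X.obj) : f x = g x :=
  ConcreteCategory.congr_hom h x

/-- The full subcategory of nonempty finite types. -/
abbrev NFin := ObjectProperty.FullSubcategory (fun X : FintypeCat => Nonempty X)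

lemma nonempty_of_isPostAlg {v : ℕ} (hv : 1 ≤ v) {X : FintypeCat}
    (h : IsPostAlg v X) : Nonempty X := by
  obtain ⟨r, ⟨e⟩⟩ := h
  exact ⟨e.symm (fun _ => ⟨0, hv⟩)⟩

variable (v : ℕ)

/-- The "image of the idempotent" functor from the Karoubi envelope of `PostCat v`
to nonempty finite types. -/
noncomputable def G (hv : 1 ≤ v) : Idempotents.Karoubi (PostCat v) ⥤ NFin where
  obj P := ⟨FintypeCat.of {x : P.X.obj // P.p x = x}, by
    obtain ⟨x⟩ := nonempty_of_isPostAlg hv P.X.property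
    exact ⟨⟨P.p x, happ' P.idem x⟩⟩⟩
  map {P Q} f := ObjectProperty.homMk (FintypeCat.homMk fun x => ⟨f.f x.1, by
    have h : f.f x.1 = Q.p (f.f (P.p x.1)) := (happ' f.comm x.1).symm
    rw [x.2] at h
    exact h.symm⟩)
  map_id P := by
    ext x
    exact x.2
  map_comp f g := rfl

lemma G_faithful (hv : 1 ≤ v) : (G v hv).Faithful := by
  constructor
  intro P Q f g h
  ext x
  have hf : f.f x = Q.p (f.f (P.p x)) := (happ' f.comm x).symm
  have hg : g.f x = Q.p (g.f (P.p x)) := (happ' g.comm x).symm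
  have hp : P.p (P.p x) = P.p x := happ' P.idem x
  have key : f.f (P.p x) = g.f (P.p x) :=
    by have := congr_arg Subtype.val (ConcreteCategory.congr_hom h (⟨P.p x, hp⟩ : {a : P.X.obj // P.p a = a})); exact this
  exact hf.trans ((congrArg Q.p key).trans hg.symm)

lemma G_full (hv : 1 ≤ v) : (G v hv).Full := by
  constructor
  intro P Q h
  have hp : ∀ x, P.p (P.p x) = P.p x := fun x => happ' P.idem x
  refine ⟨⟨ObjectProperty.homMk (FintypeCat.homMk fun x => (h ⟨P.p x, hp x⟩).1), ?_⟩, ?_⟩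
  · ext x
    show Q.p (h ⟨P.p (P.p x), hp _⟩).1 = (h ⟨P.p x, hp x⟩).1
    have h2 := (h ⟨P.p (P.p x), hp _⟩).2
    rw [h2]
    have : (⟨P.p (P.p x), hp _⟩ : {a : P.X.obj // P.p a = a}) = ⟨P.p x, hp x⟩ :=
      Subtype.ext (hp x)
    rw [this]
  · ext x
    apply Subtype.ext
    show (h ⟨P.p x.1, hp _⟩).1 = (h x).1
    have : (⟨P.p x.1, hp _⟩ : {a : P.X.obj // P.p a = a}) = x := Subtype.ext x.2
    rw [this]

lemma G_essSurj (hv1 : 1 ≤ v) (hv : 2 ≤ v) : (G v hv1).EssSurj := by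
  constructor
  intro Y
  obtain ⟨y₀⟩ := Y.property
  haveI : Nonempty Y.obj := ⟨y₀⟩
  haveI : Fintype Y.obj := FintypeCat.fintype
  set n := Fintype.card Y.obj with hn
  have hcard : Fintype.card Y.obj ≤ Fintype.card (ULift.{_} (Fin n → Fin v)) := by
    simp only [Fintype.card_ulift, Fintype.card_fun, Fintype.card_fin]
    calc n ≤ 2 ^ n := (Nat.lt_two_pow_self (n := n)).le
    _ ≤ v ^ n := Nat.pow_le_pow_left hv n
  obtain ⟨ι⟩ := Function.Embedding.nonempty_of_card_le hcard
  have hinj : Function.Injective ι := ι.injective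
  set g : ULift (Fin n → Fin v) → Y.obj := Function.invFun ι with hg
  have hgι : ∀ y, g (ι y) = y := fun y => Function.leftInverse_invFun hinj y
  set X : FintypeCat := FintypeCat.of (ULift (Fin n → Fin v)) with hX
  set p : X ⟶ X := FintypeCat.homMk fun x => ι (g x) with hp
  have hidem : ∀ x : X, p (p x) = p x := by
    intro x
    show ι (g (ι (g x))) = ι (g x)
    rw [hgι]
  have hidem' : p ≫ p = p := FintypeCat.hom_ext _ _ hidem
  refine ⟨⟨⟨X, n, ⟨Equiv.ulift⟩⟩, ObjectProperty.homMk p, ObjectProperty.hom_ext _ hidem'⟩, ⟨?_⟩⟩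
  refine ⟨ObjectProperty.homMk (FintypeCat.homMk fun x => g x.1), ObjectProperty.homMk (FintypeCat.homMk fun y => ⟨ι y, ?_⟩), ?_, ?_⟩
  · show ι (g (ι y)) = ι y
    rw [hgι]
  · ext x
    apply Subtype.ext
    show ι (g x.1) = x.1
    exact x.2
  · ext y
    show g (ι y) = y
    exact hgι y

/-- The universe-lifting functor on nonempty finite types. -/
def U : NFin.{0} ⥤ NFin.{u} where
  obj X := ⟨FintypeCat.of (ULift.{u} X.obj), X.property.elim fun x => ⟨⟨x⟩⟩⟩
  map f := ObjectProperty.homMk (FintypeCat.homMk fun x => ULift.up (f x.down))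
  map_id _ := rfl
  map_comp _ _ := rfl

lemma U_faithful : (U.{u}).Faithful := by
  constructor
  intro X Y f g h
  ext x
  exact congr_arg ULift.down (ConcreteCategory.congr_hom h (ULift.up x))

lemma U_full : (U.{u}).Full := by
  constructor
  intro X Y h
  exact ⟨ObjectProperty.homMk (FintypeCat.homMk fun x => (h (ULift.up x)).down), by ext x; rfl⟩

lemma U_essSurj : (U.{u}).EssSurj := by
  constructor
  intro Y
  obtain ⟨y₀⟩ := Y.property
  haveI : Nonempty Y.obj := ⟨y₀⟩
  haveI : Fintype Y.obj := FintypeCat.fintype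
  let e : Y.obj ≃ Fin (Fintype.card Y.obj) := Fintype.equivFin Y.obj
  refine ⟨⟨FintypeCat.of (Fin (Fintype.card Y.obj)), ⟨e y₀⟩⟩, ⟨?_⟩⟩
  refine ⟨ObjectProperty.homMk (FintypeCat.homMk fun x => e.symm x.down), ObjectProperty.homMk (FintypeCat.homMk fun y => ULift.up (e y)), ?_, ?_⟩
  · ext x
    exact ULift.ext _ _ (e.apply_symm_apply x.down)
  · ext y
    exact e.symm_apply_apply y

noncomputable def equivNFin (hv : 2 ≤ v) : Idempotents.Karoubi (PostCat v) ≌ NFin.{0} := by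
  have hv1 : 1 ≤ v := by omega
  haveI := G_faithful v hv1
  haveI := G_full v hv1
  haveI := G_essSurj v hv1 hv
  haveI := U_faithful
  haveI := U_full
  haveI := U_essSurj
  haveI : (G v hv1).IsEquivalence := {}
  haveI : (U).IsEquivalence := {}
  exact (G v hv1).asEquivalence.trans (U).asEquivalence.symm

end PostAux

/-- For all integers `v, w ≥ 2`, the Karoubi envelopes (idempotent completions)
of the categories of finitely generated free Post algebras of valences `v` and
`w` are equivalent; in particular all the Lawvere theories `Post_v` are Morita
equivalent to the theory `Boole = Post_2` of Boolean algebras. -/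
theorem karoubi_post_equiv_karoubi_post (v w : ℕ) (hv : 2 ≤ v) (hw : 2 ≤ w) :
    Nonempty (Idempotents.Karoubi (PostCat v) ≌ Idempotents.Karoubi (PostCat w)) :=
  ⟨(PostAux.equivNFin v hv).trans (PostAux.equivNFin w hw).symm⟩
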